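/- The elliptic curve E₁ : y² = x³ + 4x over ℚ has Mordell–Weil group isomorphic to ℤ/4ℤ, with nonzero points exactly (0,0) and (2, ±4). -/

import Mathlib

open WeierstrassCurve WeierstrassCurve.Affine

/-- The elliptic curve `E₁ : y² = x³ + 4x` over `ℚ`. -/
def E₁ : Affine ℚ := { a₁ := 0, a₂ := 0, a₃ := 0, a₄ := 4, a₆ := 0 }

section IntegerDescent

private lemma coprime2 {v : ℤ} (hv : v % 2 = 1) : IsCoprime (2:ℤ) v :=
  (Int.prime_two.coprime_iff_not_dvd).mpr (by omega)

private lemma pow4_of_coprime {X Y u : ℤ} (hX : 0 < X) (hY : 0 < Y) (h : IsCoprime X Y)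
    (he : X * Y = u ^ 4) : ∃ S T : ℤ, X = S ^ 4 ∧ Y = T ^ 4 := by
  have h2 : X * Y = (u ^ 2) ^ 2 := by rw [he]; ring
  obtain ⟨c, hc⟩ := Int.sq_of_isCoprime h h2
  obtain ⟨d, hd⟩ := Int.sq_of_isCoprime h.symm (by rw [mul_comm]; exact h2)
  have hc' : X = |c| ^ 2 := by
    rcases hc with h' | h'
    · rw [sq_abs]; exact h'
    · nlinarith [sq_nonneg c]
  have hd' : Y = |d| ^ 2 := by
    rcases hd with h' | h'
    · rw [sq_abs]; exact h'
    · nlinarith [sq_nonneg d]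
  have hcpos : 0 < |c| := by nlinarith [abs_nonneg c]
  have hdpos : 0 < |d| := by nlinarith [abs_nonneg d]
  have hcd : |c| * |d| = u ^ 2 := by
    have h0 : (|c| * |d| - u ^ 2) * (|c| * |d| + u ^ 2) = 0 := by
      have : (|c| * |d|) ^ 2 = (u ^ 2) ^ 2 := by rw [← h2, hc', hd']; ring
      nlinarith [this]
    rcases mul_eq_zero.mp h0 with h' | h'
    · linarith
    · nlinarith [sq_nonneg u]
  have hcop : IsCoprime |c| |d| := by
    have : IsCoprime (|c| ^ 2) (|d| ^ 2) := by rwa [← hc', ← hd']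
    exact ((IsCoprime.pow_left_iff two_pos).mp ((IsCoprime.pow_right_iff two_pos).mp this))
  obtain ⟨S, hS⟩ := Int.sq_of_isCoprime hcop hcd
  obtain ⟨T, hT⟩ := Int.sq_of_isCoprime hcop.symm (by rw [mul_comm]; exact hcd)
  have hS' : |c| = S ^ 2 := by
    rcases hS with h' | h'
    · exact h'
    · nlinarith [sq_nonneg S]
  have hT' : |d| = T ^ 2 := by
    rcases hT with h' | h'
    · exact h'
    · nlinarith [sq_nonneg T]
  exact ⟨S, T, by rw [hc', hS']; ring, by rw [hd', hT']; ring⟩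

private lemma L1aux {v u b : ℤ} (hb : 0 < b) (hv : v % 2 = 1) (hu : u ≠ 0)
    (hco : IsCoprime v u) (he : v ^ 4 + 4 * u ^ 4 = b ^ 2) :
    ∃ S T : ℤ, S ≠ 0 ∧ S ^ 4 + v ^ 2 = T ^ 4 ∧ 2 * T ^ 4 = b + v ^ 2 := by
  have hu4 : 0 < u ^ 4 := by positivity
  have hbv : v ^ 2 < b := by nlinarith [sq_nonneg v, sq_nonneg (v ^ 2)]
  have hbodd : b % 2 = 1 := by
    have hvo : Odd (v ^ 4) := (Int.odd_iff.mpr hv).pow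
    have h2 : Odd (b ^ 2) := by
      rw [← he]; exact hvo.add_even ⟨2 * u ^ 4, by ring⟩
    have hbo : Odd b := by
      rcases Int.even_or_odd b with hb' | hb'
      · exact absurd (by rw [sq]; exact hb'.mul_right b) (Int.not_even_iff_odd.mpr h2)
      · exact hb'
    exact Int.odd_iff.mp hbo
  have hv2 : v ^ 2 % 2 = 1 := Int.odd_iff.mp (by rw [sq]; exact (Int.odd_iff.mpr hv).mul (Int.odd_iff.mpr hv))
  obtain ⟨X, hX⟩ : (2:ℤ) ∣ b - v ^ 2 := by omega
  have hb' : b = 2 * X + v ^ 2 := by omega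
  have hXY : X * (X + v ^ 2) = u ^ 4 := by
    have h2 : v ^ 4 + 4 * u ^ 4 = (2 * X + v ^ 2) ^ 2 := by rw [← hb']; exact he
    have h3 : 4 * (X * (X + v ^ 2)) = 4 * u ^ 4 := by linear_combination (-1 : ℤ) * h2
    exact mul_left_cancel₀ (by norm_num : (4:ℤ) ≠ 0) h3
  have hXpos : 0 < X := by omega
  have hYpos : 0 < X + v ^ 2 := by nlinarith [sq_nonneg v]
  -- coprimality of v and b
  have hvb : IsCoprime v b := by
    have h4 : IsCoprime v (4 * u ^ 4) :=
      (((coprime2 hv).symm.mul_right (coprime2 hv).symm).mul_right (hco.pow_right))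
    have h5 : IsCoprime (v ^ 4) (4 * u ^ 4) := h4.pow_left
    have h6 : IsCoprime (v ^ 4) (4 * u ^ 4 + v ^ 4 * 1) := h5.add_mul_left_right 1
    have h7 : IsCoprime (v ^ 4) (b ^ 2) := by
      have : 4 * u ^ 4 + v ^ 4 * 1 = b ^ 2 := by linear_combination he
      rwa [this] at h6
    exact (IsCoprime.pow_left_iff (by norm_num)).mp ((IsCoprime.pow_right_iff (by norm_num)).mp h7)
  have hcop : IsCoprime X (X + v ^ 2) := by
    rw [Int.isCoprime_iff_gcd_eq_one]
    have hd1 : (Int.gcd X (X + v ^ 2) : ℤ) ∣ v ^ 2 := by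
      have := dvd_sub (Int.gcd_dvd_right (a := X) (b := X + v ^ 2)) (Int.gcd_dvd_left (a := X) (b := X + v ^ 2))
      simpa using this
    have hd2 : (Int.gcd X (X + v ^ 2) : ℤ) ∣ b := by
      have := dvd_add (Int.gcd_dvd_left (a := X) (b := X + v ^ 2)) (Int.gcd_dvd_right (a := X) (b := X + v ^ 2))
      have h8 : b = X + (X + v ^ 2) := by omega
      rwa [← h8] at this
    have hg : (Int.gcd X (X + v ^ 2) : ℤ) ∣ Int.gcd (v ^ 2) b := Int.dvd_coe_gcd hd1 hd2
    have hvb2 : Int.gcd (v ^ 2) b = 1 := Int.isCoprime_iff_gcd_eq_one.mp (hvb.pow_left)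
    rw [hvb2] at hg
    exact Nat.dvd_one.mp (by exact_mod_cast hg)
  obtain ⟨S, T, hS, hT⟩ := pow4_of_coprime hXpos hYpos hcop hXY
  refine ⟨S, T, ?_, by rw [← hS, ← hT], by rw [← hT]; omega⟩
  rintro rfl
  simp at hS
  omega

private lemma caseB {t s m n : ℤ} (hm : 0 < m) (hn : 0 < n) (hs : s ≠ 0)
    (hgcd : Int.gcd m n = 1) (hm2 : m % 2 = 0) (hn2 : n % 2 = 1)
    (h1 : s ^ 2 = 2 * m * n) (ht2 : t ^ 2 = m ^ 2 + n ^ 2) :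
    ∃ S A T : ℤ, S ≠ 0 ∧ A ≠ 0 ∧ S ^ 4 + A ^ 2 = T ^ 4 ∧ T.natAbs < t.natAbs := by
  obtain ⟨k, hk⟩ : (2:ℤ) ∣ m := by omega
  have hkpos : 0 < k := by omega
  obtain ⟨s₁, hs₁⟩ : (2:ℤ) ∣ s := by
    rcases Int.even_or_odd s with he | ho
    · exact he.two_dvd
    · exfalso
      have h4 : (4:ℤ) ∣ s ^ 2 := ⟨k * n, by rw [h1, hk]; ring⟩
      have : s ^ 2 % 2 = 1 := Int.odd_iff.mp (by rw [sq]; exact ho.mul ho)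
      omega
  have hs1 : s₁ ^ 2 = k * n := by
    have h4 : 4 * s₁ ^ 2 = 4 * (k * n) := by
      have h1' : (2 * s₁) ^ 2 = 2 * (2 * k) * n := by rw [← hs₁, ← hk]; exact h1
      linear_combination h1'
    exact mul_left_cancel₀ (by norm_num : (4:ℤ) ≠ 0) h4
  have hmn : IsCoprime m n := Int.isCoprime_iff_gcd_eq_one.mpr hgcd
  have hkn : IsCoprime k n := ((hmn.symm.of_isCoprime_of_dvd_right ⟨2, by rw [hk]; ring⟩)).symm
  obtain ⟨u, hu⟩ := Int.sq_of_isCoprime hkn hs1.symm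
  obtain ⟨v, hv⟩ := Int.sq_of_isCoprime hkn.symm (by rw [mul_comm]; exact hs1.symm)
  have hku : k = u ^ 2 := by
    rcases hu with h' | h'
    · exact h'
    · nlinarith [sq_nonneg u]
  have hnv : n = v ^ 2 := by
    rcases hv with h' | h'
    · exact h'
    · nlinarith [sq_nonneg v]
  have hvodd : v % 2 = 1 := by
    rcases Int.even_or_odd v with he | ho
    · exfalso
      obtain ⟨r, hr⟩ := he
      have : n = 2 * (2 * r ^ 2) := by rw [hnv, hr]; ring
      omega
    · exact Int.odd_iff.mp ho
  have hu0 : u ≠ 0 := by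
    rintro rfl
    simp at hku
    omega
  have hcovu : IsCoprime v u := by
    have : IsCoprime (u ^ 2) (v ^ 2) := by rwa [← hku, ← hnv]
    exact ((IsCoprime.pow_left_iff two_pos).mp ((IsCoprime.pow_right_iff two_pos).mp this)).symm
  have ht0 : t ≠ 0 := by
    rintro rfl
    nlinarith
  have hm4 : m ^ 2 = 4 * u ^ 4 := by rw [hk, hku]; ring
  have hn4 : n ^ 2 = v ^ 4 := by rw [hnv]; ring
  have habs : v ^ 4 + 4 * u ^ 4 = |t| ^ 2 := by rw [sq_abs, ht2, hm4, hn4]; ring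
  obtain ⟨S, T, hS0, hST, h2T⟩ := L1aux (abs_pos.mpr ht0) hvodd hu0 hcovu habs
  have hu4 : 0 < u ^ 4 := by positivity
  have hv2t : v ^ 2 < |t| := by nlinarith [sq_nonneg v, sq_nonneg (v ^ 2), abs_pos.mpr ht0]
  have hT4 : T ^ 4 < |t| := by omega
  have hT4pos : 0 < T ^ 4 := by nlinarith [sq_nonneg v, pow_pos (abs_pos.mpr hS0) 4, sq_abs S, hST]
  refine ⟨S, v, T, hS0, by omega, hST, ?_⟩
  have h5 : (T ^ 4).natAbs < t.natAbs := by
    have h6 : |t| = (t.natAbs : ℤ) := Int.abs_eq_natAbs t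
    have h7 : (T ^ 4) = ((T ^ 4).natAbs : ℤ) := (Int.natAbs_of_nonneg (le_of_lt hT4pos)).symm
    omega
  calc T.natAbs ≤ T.natAbs ^ 4 := Nat.le_self_pow (by norm_num) _
  _ = (T ^ 4).natAbs := (Int.natAbs_pow T 4).symm
  _ < t.natAbs := h5

theorem descent : ∀ t s a : ℤ, s ≠ 0 → a ≠ 0 → s ^ 4 + a ^ 2 ≠ t ^ 4 := by
  have key : ∀ N : ℕ, ∀ t s a : ℤ, t.natAbs ≤ N → s ≠ 0 → a ≠ 0 → s ^ 4 + a ^ 2 ≠ t ^ 4 := by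
    intro N
    induction N using Nat.strong_induction_on with
    | _ N IH =>
      intro t s a htn hs ha he
      have hs4 : 0 < s ^ 4 := by positivity
      have ha2 : 0 < a ^ 2 := by positivity
      have ht0 : t ≠ 0 := by
        rintro rfl
        simp at he
        omega
      by_cases hco : Int.gcd s t = 1
      case neg =>
        -- divide by the gcd
        have hgnat : 0 < Int.gcd s t := Int.gcd_pos_of_ne_zero_left t hs
        have hgnat2 : 2 ≤ Int.gcd s t := by omega
        set g : ℤ := (Int.gcd s t : ℤ) with hgdef
        have hg1 : 1 < g := by rw [hgdef]; exact_mod_cast hgnat2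
        have hg0 : g ≠ 0 := by omega
        obtain ⟨s', hs'⟩ : g ∣ s := Int.gcd_dvd_left s t
        obtain ⟨t', ht'⟩ : g ∣ t := Int.gcd_dvd_right s t
        have hga : g ^ 2 ∣ a := by
          rw [← Int.pow_dvd_pow_iff (two_ne_zero), ← sq_abs a]
          have : a ^ 2 = t ^ 4 - s ^ 4 := by omega
          refine ⟨t' ^ 4 - s' ^ 4, ?_⟩
          rw [sq_abs, this, hs', ht']
          ring
        obtain ⟨a', ha'⟩ := hga
        have he' : s' ^ 4 + a' ^ 2 = t' ^ 4 := by
          have h4 : g ^ 4 * (s' ^ 4 + a' ^ 2) = g ^ 4 * t' ^ 4 := by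
            have : s ^ 4 + a ^ 2 = t ^ 4 := he
            rw [hs', ht', ha'] at this
            linear_combination this
          exact mul_left_cancel₀ (by positivity) h4
        have hs'0 : s' ≠ 0 := by
          rintro rfl
          rw [mul_zero] at hs'
          exact hs hs'
        have ha'0 : a' ≠ 0 := by
          rintro rfl
          rw [mul_zero] at ha'
          exact ha ha'
        have ht'0 : t' ≠ 0 := by
          rintro rfl
          rw [mul_zero] at ht'
          exact ht0 ht'
        have hlt : t'.natAbs < t.natAbs := by
          rw [ht', Int.natAbs_mul]
          have h5 : 1 < g.natAbs := by
            rcases Int.natAbs_eq g with h | h <;> omega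
          have h6 : 0 < t'.natAbs := Int.natAbs_pos.mpr ht'0
          nlinarith
        exact IH t'.natAbs (lt_of_lt_of_le hlt htn) t' s' a' le_rfl hs'0 ha'0 he'
      case pos =>
        have hst : IsCoprime s t := Int.isCoprime_iff_gcd_eq_one.mpr hco
        have hsa : IsCoprime s a := by
          have h1 : IsCoprime (s ^ 4) (t ^ 4) := (hst.pow_left).pow_right
          rw [← he] at h1
          have h2 : IsCoprime (s ^ 4) (s ^ 4 + a ^ 2 + s ^ 4 * (-1)) := h1.add_mul_left_right (-1)
          have h3 : s ^ 4 + a ^ 2 + s ^ 4 * (-1) = a ^ 2 := by ring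
          rw [h3] at h2
          exact (IsCoprime.pow_left_iff four_pos).mp ((IsCoprime.pow_right_iff two_pos).mp h2)
        have htriple : PythagoreanTriple (s ^ 2) a (t ^ 2) := by
          show s ^ 2 * s ^ 2 + a * a = t ^ 2 * t ^ 2
          linear_combination he
        have hgcd2 : Int.gcd (s ^ 2) a = 1 := Int.isCoprime_iff_gcd_eq_one.mp hsa.pow_left
        obtain ⟨m, n, hmn, hco2, hpar⟩ := htriple.isPrimitiveClassified_of_coprime hgcd2
        have ht2 : t ^ 2 = m ^ 2 + n ^ 2 := by
          have h0 : (t ^ 2 - (m ^ 2 + n ^ 2)) * (t ^ 2 + (m ^ 2 + n ^ 2)) = 0 := by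
            rcases hmn with ⟨h1, h2⟩ | ⟨h1, h2⟩
            · linear_combination (-1 : ℤ) * he + (s ^ 2 + m ^ 2 - n ^ 2) * h1 + (a + 2 * m * n) * h2
            · linear_combination (-1 : ℤ) * he + (s ^ 2 + 2 * m * n) * h1 + (a + m ^ 2 - n ^ 2) * h2
          rcases mul_eq_zero.mp h0 with h' | h'
          · linarith
          · nlinarith [sq_nonneg m, sq_nonneg n, pow_pos (abs_pos.mpr ht0) 2, sq_abs t]
        rcases hmn with ⟨h1, h2⟩ | ⟨h1, h2⟩
        · -- s² = m² - n², a = 2mn : direct descent to m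
          have hn0 : n ≠ 0 := by
            rintro rfl
            rw [mul_zero] at h2
            exact ha h2
          have hst0 : s * t ≠ 0 := mul_ne_zero hs ht0
          have he2 : n ^ 4 + (s * t) ^ 2 = m ^ 4 := by
            linear_combination t ^ 2 * h1 + (m ^ 2 - n ^ 2) * ht2
          have hmt : m.natAbs < t.natAbs := by
            have hlt : m ^ 2 < t ^ 2 := by nlinarith [pow_pos (abs_pos.mpr hn0) 2, sq_abs n]
            have h9 : (m ^ 2).natAbs < (t ^ 2).natAbs :=
              Int.natAbs_lt_natAbs_of_nonneg_of_lt (sq_nonneg m) hlt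
            rw [Int.natAbs_pow, Int.natAbs_pow] at h9
            exact lt_of_pow_lt_pow_left₀ 2 (Nat.zero_le _) h9
          exact IH m.natAbs (lt_of_lt_of_le hmt htn) m n (s * t) le_rfl hn0 hst0 he2
        · -- s² = 2mn, a = m² - n² : descent via L1aux
          have final : ∀ m' n' : ℤ, 0 < m' → 0 < n' → Int.gcd m' n' = 1 →
              (m' % 2 = 0 ∧ n' % 2 = 1 ∨ m' % 2 = 1 ∧ n' % 2 = 0) →
              s ^ 2 = 2 * m' * n' → t ^ 2 = m' ^ 2 + n' ^ 2 → False := by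
            intro m' n' hm' hn' hgcd' hpar' h1' ht2'
            obtain ⟨S, A, T, hS0, hA0, hSAT, hTlt⟩ :
                ∃ S A T : ℤ, S ≠ 0 ∧ A ≠ 0 ∧ S ^ 4 + A ^ 2 = T ^ 4 ∧ T.natAbs < t.natAbs := by
              rcases hpar' with ⟨hp1, hp2⟩ | ⟨hp1, hp2⟩
              · exact caseB hm' hn' hs hgcd' hp1 hp2 h1' ht2'
              · refine caseB hn' hm' hs ?_ hp2 hp1 (by linear_combination h1') (by linear_combination ht2')
                rw [Int.gcd_comm]
                exact hgcd'
            exact IH T.natAbs (lt_of_lt_of_le hTlt htn) T S A le_rfl hS0 hA0 hSAT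
          have hmn0 : 0 < m * n := by nlinarith [pow_pos (abs_pos.mpr hs) 2, sq_abs s]
          rcases lt_trichotomy m 0 with hm | hm | hm
          · have hn : n < 0 := by nlinarith
            refine final (-m) (-n) (by omega) (by omega) ?_ (by omega) (by linear_combination h1)
              (by linear_combination ht2)
            rw [Int.neg_gcd, Int.gcd_neg]
            exact hco2
          · simp [hm] at hmn0
          · have hn : 0 < n := by nlinarith
            exact final m n hm hn hco2 hpar h1 ht2
  intro t s a hs ha
  exact key t.natAbs t s a le_rfl hs ha

private lemma coprime2' {v : ℤ} (hv : v % 2 = 1) : IsCoprime (2:ℤ) v :=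
  (Int.prime_two.coprime_iff_not_dvd).mpr (by omega)

private lemma L1 {v u b : ℤ} (hv : v % 2 = 1) (hu : u ≠ 0) (hco : IsCoprime v u) :
    v ^ 4 + 4 * u ^ 4 ≠ b ^ 2 := by
  intro he
  have hv0 : v ≠ 0 := by omega
  have hb0 : b ≠ 0 := by
    rintro rfl
    have h1 : 0 < v ^ 4 := by positivity
    have h2 : 0 < u ^ 4 := by positivity
    simp at he
    omega
  have he' : v ^ 4 + 4 * u ^ 4 = |b| ^ 2 := by rw [sq_abs]; exact he
  obtain ⟨S, T, hS0, hST, -⟩ := L1aux (abs_pos.mpr hb0) hv hu hco he'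
  exact descent T S v hS0 hv0 hST

/-- If `c² = a(a² + 4f⁴)` with `a, f` coprime and `f ≠ 0`, then `a = 0` or `a = 2, f² = 1`. -/
private lemma core {a f c : ℤ} (hf : f ≠ 0) (hco : IsCoprime a f)
    (he : c ^ 2 = a * (a ^ 2 + 4 * f ^ 4)) : a = 0 ∨ (a = 2 ∧ f ^ 2 = 1) := by
  by_cases ha : a = 0
  · exact Or.inl ha
  right
  have hq : 0 < a ^ 2 + 4 * f ^ 4 := by positivity
  have hapos : 0 < a := by
    rcases lt_trichotomy a 0 with h | h | h
    · exfalso; nlinarith [sq_nonneg c]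
    · exact absurd h ha
    · exact h
  rcases Int.even_or_odd a with haev | haodd
  · -- a even
    obtain ⟨m, hm⟩ : (2:ℤ) ∣ a := haev.two_dvd
    have hfodd : f % 2 = 1 := by
      rcases Int.even_or_odd f with hfe | hfo
      · exfalso
        obtain ⟨r, hr⟩ := hfe
        have h2f : (2:ℤ) ∣ f := ⟨r, by omega⟩
        have := hco.isUnit_of_dvd' ⟨m, hm⟩ h2f
        rw [Int.isUnit_iff] at this
        omega
      · exact Int.odd_iff.mp hfo
    rcases Int.even_or_odd m with hmev | hmodd
    · -- 4 ∣ a : a = 4n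
      obtain ⟨n, hn⟩ : (2:ℤ) ∣ m := hmev.two_dvd
      have ha4 : a = 4 * n := by omega
      have hnpos : 0 < n := by omega
      have hcofn : IsCoprime n f := hco.symm.of_isCoprime_of_dvd_right ⟨4, by omega⟩ |>.symm
      have h16 : c ^ 2 = 4 ^ 2 * (n * (4 * n ^ 2 + f ^ 4)) := by rw [ha4] at he; linear_combination he
      obtain ⟨c₁, hc₁⟩ : (4:ℤ) ∣ c := by
        rw [← Int.pow_dvd_pow_iff (two_ne_zero)]
        exact ⟨n * (4 * n ^ 2 + f ^ 4), h16⟩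
      have hc₁2 : c₁ ^ 2 = n * (4 * n ^ 2 + f ^ 4) := by
        have h4 : 4 ^ 2 * c₁ ^ 2 = 4 ^ 2 * (n * (4 * n ^ 2 + f ^ 4)) := by
          rw [← h16, hc₁]; ring
        exact mul_left_cancel₀ (by norm_num) h4
      have hcop : IsCoprime n (4 * n ^ 2 + f ^ 4) := by
        have h5 : IsCoprime n (f ^ 4) := hcofn.pow_right
        have h6 : IsCoprime n (f ^ 4 + n * (4 * n)) := h5.add_mul_left_right (4 * n)
        have h7 : f ^ 4 + n * (4 * n) = 4 * n ^ 2 + f ^ 4 := by ring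
        rwa [h7] at h6
      obtain ⟨u, hu⟩ := Int.sq_of_isCoprime hcop hc₁2.symm
      obtain ⟨h', hh'⟩ := Int.sq_of_isCoprime hcop.symm (by rw [mul_comm]; exact hc₁2.symm)
      have hnu : n = u ^ 2 := by
        rcases hu with h' | h'
        · exact h'
        · nlinarith [sq_nonneg u]
      have hh2 : 4 * n ^ 2 + f ^ 4 = h' ^ 2 := by
        rcases hh' with h'' | h''
        · exact h''
        · nlinarith [sq_nonneg h', sq_nonneg f, sq_nonneg n]
      have hu0 : u ≠ 0 := by
        rintro rfl
        simp at hnu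
        omega
      have hcovu : IsCoprime f u := by
        have : IsCoprime (u ^ 2) f := by rwa [← hnu]
        exact ((IsCoprime.pow_left_iff two_pos).mp this).symm
      refine absurd (?_ : f ^ 4 + 4 * u ^ 4 = h' ^ 2) (L1 hfodd hu0 hcovu)
      rw [← hh2, hnu]; ring
    · -- a ≡ 2 mod 4 : a = 2m, m odd
      have hmpos : 0 < m := by omega
      have hm2 : m % 2 = 1 := Int.odd_iff.mp hmodd
      obtain ⟨e, he2⟩ : (2:ℤ) ∣ m ^ 2 + f ^ 4 := by
        have h1 : m ^ 2 % 2 = 1 := Int.odd_iff.mp (by rw [sq]; exact hmodd.mul hmodd)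
        have hfo : Odd f := Int.odd_iff.mpr hfodd
        have h2 : f ^ 4 % 2 = 1 := Int.odd_iff.mp (by
          have : f ^ 4 = (f ^ 2) * (f ^ 2) := by ring
          rw [this]; exact (hfo.pow).mul (hfo.pow))
        omega
      have h16 : c ^ 2 = 4 ^ 2 * (m * e) := by
        rw [hm] at he
        linear_combination he + 8 * m * he2
      obtain ⟨c₁, hc₁⟩ : (4:ℤ) ∣ c := by
        rw [← Int.pow_dvd_pow_iff (two_ne_zero)]
        exact ⟨m * e, h16⟩
      have hc₁2 : c₁ ^ 2 = m * e := by
        have h4 : 4 ^ 2 * c₁ ^ 2 = 4 ^ 2 * (m * e) := by rw [← h16, hc₁]; ring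
        exact mul_left_cancel₀ (by norm_num) h4
      have hcofm : IsCoprime m f := hco.symm.of_isCoprime_of_dvd_right ⟨2, by omega⟩ |>.symm
      have hcop : IsCoprime m e := by
        have h5 : IsCoprime m (f ^ 4) := hcofm.pow_right
        have h6 : IsCoprime m (f ^ 4 + m * m) := h5.add_mul_left_right m
        have h7 : f ^ 4 + m * m = m ^ 2 + f ^ 4 := by ring
        rw [h7] at h6
        exact h6.of_isCoprime_of_dvd_right ⟨2, by omega⟩
      obtain ⟨u, hu⟩ := Int.sq_of_isCoprime hcop hc₁2.symm
      obtain ⟨w, hw⟩ := Int.sq_of_isCoprime hcop.symm (by rw [mul_comm]; exact hc₁2.symm)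
      have hepos : 0 < e := by nlinarith [sq_nonneg m, sq_nonneg (f ^ 2)]
      have hmu : m = u ^ 2 := by
        rcases hu with h' | h'
        · exact h'
        · nlinarith [sq_nonneg u]
      have hew : e = w ^ 2 := by
        rcases hw with h' | h'
        · exact h'
        · nlinarith [sq_nonneg w]
      -- u⁴ + f⁴ = 2w²
      have hkey : u ^ 4 + f ^ 4 = 2 * w ^ 2 := by
        rw [← hew]
        have : m ^ 2 = u ^ 4 := by rw [hmu]; ring
        omega
      have huodd : u % 2 = 1 := by
        rcases Int.even_or_odd u with hue | huo
        · exfalso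
          obtain ⟨r, hr⟩ := hue
          have : m = 2 * (2 * r ^ 2) := by rw [hmu, hr]; ring
          omega
        · exact Int.odd_iff.mp huo
      obtain ⟨D, hD⟩ : (2:ℤ) ∣ u ^ 4 - f ^ 4 := by
        have h1 : u ^ 4 % 2 = 1 := Int.odd_iff.mp (by
          have : u ^ 4 = (u ^ 2) * (u ^ 2) := by ring
          rw [this]; exact ((Int.odd_iff.mpr huodd).pow).mul ((Int.odd_iff.mpr huodd).pow))
        have hfo : Odd f := Int.odd_iff.mpr hfodd
        have h2 : f ^ 4 % 2 = 1 := Int.odd_iff.mp (by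
          have : f ^ 4 = (f ^ 2) * (f ^ 2) := by ring
          rw [this]; exact (hfo.pow).mul (hfo.pow))
        omega
      have hid : (u * f) ^ 4 + D ^ 2 = w ^ 4 := by
        have h4 : 4 * ((u * f) ^ 4 + D ^ 2) = 4 * w ^ 4 := by
          linear_combination (u ^ 4 + f ^ 4 + 2 * w ^ 2) * hkey - (u ^ 4 - f ^ 4 + 2 * D) * hD
        exact mul_left_cancel₀ (by norm_num : (4:ℤ) ≠ 0) h4
      have hD0 : D = 0 := by
        by_contra hD0
        exact descent w (u * f) D (mul_ne_zero (by rintro rfl; simp at hmu; omega) hf) hD0 hid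
      have huf : u ^ 2 = f ^ 2 := by
        have h1 : u ^ 4 = f ^ 4 := by omega
        have h0 : (u ^ 2 - f ^ 2) * (u ^ 2 + f ^ 2) = 0 := by linear_combination h1
        rcases mul_eq_zero.mp h0 with h' | h'
        · linarith
        · nlinarith [sq_nonneg u, sq_nonneg f]
      have hf2 : f ^ 2 = 1 := by
        have h1 : IsCoprime (f ^ 2) f := by rw [← huf, ← hmu]; exact hcofm
        have h2 : IsUnit f := isCoprime_self.mp ((IsCoprime.pow_left_iff two_pos).mp h1)
        rcases Int.isUnit_iff.mp h2 with h | h <;> rw [h] <;> norm_num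
      constructor
      · omega
      · exact hf2
  · -- a odd
    exfalso
    have ha2 : a % 2 = 1 := Int.odd_iff.mp haodd
    have hcop : IsCoprime a (a ^ 2 + 4 * f ^ 4) := by
      have h4 : IsCoprime a (4 * f ^ 4) :=
        ((coprime2' ha2).symm.mul_right (coprime2' ha2).symm).mul_right (hco.pow_right)
      have h6 : IsCoprime a (4 * f ^ 4 + a * a) := h4.add_mul_left_right a
      have h7 : 4 * f ^ 4 + a * a = a ^ 2 + 4 * f ^ 4 := by ring
      rwa [h7] at h6
    obtain ⟨g, hg⟩ := Int.sq_of_isCoprime hcop he.symm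
    obtain ⟨h', hh'⟩ := Int.sq_of_isCoprime hcop.symm (by rw [mul_comm]; exact he.symm)
    have hag : a = g ^ 2 := by
      rcases hg with h'' | h''
      · exact h''
      · nlinarith [sq_nonneg g]
    have hh2 : a ^ 2 + 4 * f ^ 4 = h' ^ 2 := by
      rcases hh' with h'' | h''
      · exact h''
      · nlinarith [sq_nonneg h']
    have hgodd : g % 2 = 1 := by
      rcases Int.even_or_odd g with hge | hgo
      · exfalso
        obtain ⟨r, hr⟩ := hge
        have : a = 2 * (2 * r ^ 2) := by rw [hag, hr]; ring
        omega
      · exact Int.odd_iff.mp hgo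
    have hg0 : g ≠ 0 := by rintro rfl; simp at hag; omega
    have hcogf : IsCoprime g f := by
      have : IsCoprime (g ^ 2) f := by rwa [← hag]
      exact (IsCoprime.pow_left_iff two_pos).mp this
    refine absurd (?_ : g ^ 4 + 4 * f ^ 4 = h' ^ 2) (L1 hgodd hf hcogf)
    rw [← hh2, hag]; ring

private lemma rat_step {x y : ℚ} (h : y ^ 2 = x ^ 3 + 4 * x) :
    (x = 0 ∧ y = 0) ∨ (x = 2 ∧ (y = 4 ∨ y = -4)) := by
  set a : ℤ := x.num with hadef
  set b : ℤ := (x.den : ℤ) with hbdef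
  have hb0 : 0 < b := by rw [hbdef]; exact_mod_cast x.pos
  have hab : IsCoprime a b := by
    rw [Int.isCoprime_iff_gcd_eq_one]
    exact x.reduced
  have hxa : (x : ℚ) = (a : ℚ) / (b : ℚ) := by
    rw [hadef, hbdef]
    push_cast
    exact (Rat.num_div_den x).symm
  set N : ℤ := a * (a ^ 2 + 4 * b ^ 2) with hNdef
  have hy2 : y ^ 2 = (N : ℚ) / ((b ^ 3 : ℤ) : ℚ) := by
    rw [h, hxa, hNdef]
    have hbne : (b : ℚ) ≠ 0 := by exact_mod_cast hb0.ne'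
    push_cast
    field_simp
  have hcop : IsCoprime N (b ^ 3) := by
    have h1 : IsCoprime b (a ^ 2 + 4 * b ^ 2) := by
      have h2 : IsCoprime b (a ^ 2) := hab.symm.pow_right
      have h3 : IsCoprime b (a ^ 2 + b * (4 * b)) := h2.add_mul_left_right (4 * b)
      have h4 : a ^ 2 + b * (4 * b) = a ^ 2 + 4 * b ^ 2 := by ring
      rwa [h4] at h3
    exact ((hab.mul_left h1.symm)).pow_right
  have hnum : (y ^ 2).num = N ∧ ((y ^ 2).den : ℤ) = b ^ 3 := by
    have hb3 : 0 < b ^ 3 := by positivity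
    have hcn : N.natAbs.Coprime (b ^ 3).natAbs := by
      rw [Nat.coprime_iff_gcd_eq_one]
      exact Int.isCoprime_iff_gcd_eq_one.mp hcop
    constructor
    · rw [hy2]; exact Rat.num_div_eq_of_coprime hb3 hcn
    · rw [hy2]
      exact Rat.den_div_eq_of_coprime hb3 hcn
  obtain ⟨hnum1, hnum2⟩ := hnum
  have hynum : y.num ^ 2 = N := by rw [← hnum1, Rat.num_pow]
  have hyden : ((y.den : ℤ)) ^ 2 = b ^ 3 := by
    rw [← hnum2, Rat.den_pow]
    push_cast
    ring
  -- b is a perfect square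
  obtain ⟨q, hq⟩ : b ∣ (y.den : ℤ) := by
    rw [← Int.pow_dvd_pow_iff (two_ne_zero : (2:ℕ) ≠ 0), hyden]
    exact ⟨b, by ring⟩
  have hfsq : q ^ 2 = b := by
    have h4 : b ^ 2 * q ^ 2 = b ^ 2 * b := by
      have : (b * q) ^ 2 = b ^ 3 := by rw [← hq]; exact hyden
      linear_combination this
    exact mul_left_cancel₀ (by positivity) h4
  have hq0 : q ≠ 0 := by
    rintro rfl
    simp at hfsq
    omega
  have hcoaq : IsCoprime a q := hab.of_isCoprime_of_dvd_right ⟨q, by rw [← hfsq]; ring⟩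
  have hc2 : y.num ^ 2 = a * (a ^ 2 + 4 * q ^ 4) := by
    rw [hynum, hNdef, ← hfsq]; ring
  rcases core hq0 hcoaq hc2 with h0 | ⟨ha2, hq1⟩
  · left
    have hx0 : x = 0 := by
      rw [← Rat.num_eq_zero]; exact h0
    refine ⟨hx0, ?_⟩
    rw [hx0] at h
    have hy0 : y ^ 2 = 0 := by rw [h]; ring
    exact pow_eq_zero_iff two_ne_zero |>.mp hy0
  · right
    have hb1 : b = 1 := by rw [← hfsq]; omega
    have hx2 : x = 2 := by
      rw [hxa, ha2, hb1]
      norm_num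
    refine ⟨hx2, ?_⟩
    rw [hx2] at h
    have h16 : y ^ 2 = 16 := by rw [h]; norm_num
    have h0 : (y - 4) * (y + 4) = 0 := by linear_combination h16
    rcases mul_eq_zero.mp h0 with h' | h'
    · left; linarith
    · right; linarith

end IntegerDescent

@[simp] lemma E₁_a₁ : E₁.a₁ = 0 := rfl
@[simp] lemma E₁_a₂ : E₁.a₂ = 0 := rfl
@[simp] lemma E₁_a₃ : E₁.a₃ = 0 := rfl
@[simp] lemma E₁_a₄ : E₁.a₄ = 4 := rfl
@[simp] lemma E₁_a₆ : E₁.a₆ = 0 := rfl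

lemma E₁_negY (x y : ℚ) : E₁.negY x y = -y := by simp [negY]

lemma E₁_equation_iff (x y : ℚ) : E₁.Equation x y ↔ y ^ 2 = x ^ 3 + 4 * x := by
  rw [equation_iff]
  simp

lemma E₁_nonsingular {x y : ℚ} (h : E₁.Equation x y) : E₁.Nonsingular x y := by
  rw [nonsingular_iff]
  refine ⟨h, ?_⟩
  rw [E₁_equation_iff] at h
  simp only [E₁_a₁, E₁_a₂, E₁_a₃, E₁_a₄]
  rcases rat_step h with ⟨hx, hy⟩ | ⟨hx, hy⟩
  · left; rw [hx]; norm_num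
  · right; rcases hy with hy | hy <;> rw [hy] <;> norm_num

lemma hP : E₁.Nonsingular 2 4 := E₁_nonsingular ((E₁_equation_iff 2 4).mpr (by norm_num))
lemma hP0 : E₁.Nonsingular 0 0 := E₁_nonsingular ((E₁_equation_iff 0 0).mpr (by norm_num))
lemma hQ : E₁.Nonsingular 2 (-4) := E₁_nonsingular ((E₁_equation_iff 2 (-4)).mpr (by norm_num))

lemma point_classify (P : E₁.Point) : P = 0 ∨ ∃ (x y : ℚ) (h : E₁.Nonsingular x y),
    P = Point.some _ _ h ∧ ((x, y) = (0, 0) ∨ (x, y) = (2, 4) ∨ (x, y) = (2, -4)) := by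
  cases P with
  | zero => exact Or.inl rfl
  | @some x y h =>
    right
    refine ⟨x, y, h, rfl, ?_⟩
    have heq : y ^ 2 = x ^ 3 + 4 * x :=
      (E₁_equation_iff x y).mp ((E₁.nonsingular_iff x y).mp h).1
    rcases rat_step heq with ⟨hx, hy⟩ | ⟨hx, hy⟩
    · left; rw [hx, hy]
    · rcases hy with hy | hy
      · right; left; rw [hx, hy]
      · right; right; rw [hx, hy]

lemma some_eq_some {W : Affine ℚ} {x₁ y₁ x₂ y₂ : ℚ} (h₁ : W.Nonsingular x₁ y₁)
    (hx : x₁ = x₂) (hy : y₁ = y₂) (h₂ : W.Nonsingular x₂ y₂) :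
    Point.some _ _ h₁ = Point.some _ _ h₂ := by
  subst hx; subst hy; rfl

-- doubling : P + P = (0,0)
lemma hPP : Point.some _ _ hP + Point.some _ _ hP = Point.some _ _ hP0 := by
  have hy : (4:ℚ) ≠ E₁.negY 2 4 := by rw [E₁_negY]; norm_num
  rw [Point.add_self_of_Y_ne hy]
  have hs : E₁.slope 2 2 4 4 = 2 := by
    rw [slope_of_Y_ne rfl hy, E₁_negY]
    simp
    norm_num
  refine some_eq_some _ ?_ ?_ _
  · rw [addX, hs]; simp; norm_num
  · rw [addY, negAddY, addX, E₁_negY, hs]; simp; norm_num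

-- (0,0) + P = (2,-4)
lemma hP0P : Point.some _ _ hP0 + Point.some _ _ hP = Point.some _ _ hQ := by
  have hx : (0:ℚ) ≠ 2 := by norm_num
  rw [Point.add_of_X_ne hx]
  have hs : E₁.slope 0 2 0 4 = 2 := by
    rw [slope_of_X_ne hx]
    norm_num
  refine some_eq_some _ ?_ ?_ _
  · rw [addX, hs]; simp; norm_num
  · rw [addY, negAddY, addX, E₁_negY, hs]; simp; norm_num

-- (0,0) + (0,0) = 0
lemma hP0P0 : Point.some _ _ hP0 + Point.some _ _ hP0 = 0 :=
  Point.add_of_Y_eq rfl (by rw [E₁_negY]; norm_num)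

-- (2,-4) + P = 0
lemma hQP : Point.some _ _ hQ + Point.some _ _ hP = 0 :=
  Point.add_of_Y_eq rfl (by rw [E₁_negY])

lemma h2smul : (2:ℤ) • Point.some _ _ hP = Point.some _ _ hP0 := by
  rw [show (2:ℤ) = 1 + 1 by norm_num, add_zsmul, one_zsmul]
  exact hPP

lemma h3smul : (3:ℤ) • Point.some _ _ hP = Point.some _ _ hQ := by
  rw [show (3:ℤ) = 2 + 1 by norm_num, add_zsmul, h2smul, one_zsmul]
  exact hP0P

lemma h4smul : (4:ℤ) • Point.some _ _ hP = 0 := by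
  rw [show (4:ℤ) = 3 + 1 by norm_num, add_zsmul, h3smul, one_zsmul]
  exact hQP

noncomputable def eHom : ZMod 4 →+ E₁.Point :=
  ZMod.lift 4 ⟨zmultiplesHom E₁.Point (Point.some _ _ hP), by
    show ((4:ℕ) : ℤ) • Point.some _ _ hP = 0
    exact_mod_cast h4smul⟩

lemma eHom_coe (m : ℤ) : eHom ((m : ℤ) : ZMod 4) = m • Point.some _ _ hP :=
  ZMod.lift_coe 4 _ m

lemma eHom_nat (k : ℕ) : eHom ((k : ℕ) : ZMod 4) = (k : ℤ) • Point.some _ _ hP := by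
  have h1 : ((k : ℕ) : ZMod 4) = ((k : ℤ) : ZMod 4) := by push_cast; rfl
  rw [h1, eHom_coe]

lemma eHom_bij : Function.Bijective eHom := by
  constructor
  · rw [injective_iff_map_eq_zero]
    intro n hn
    have hval : n.val < 4 := ZMod.val_lt n
    have hn' : ((n.val : ℕ) : ZMod 4) = n := ZMod.natCast_zmod_val n
    have hk : n.val = 0 ∨ n.val = 1 ∨ n.val = 2 ∨ n.val = 3 := by omega
    rcases hk with h | h | h | h
    · rw [← hn', h]; rfl
    · rw [← hn', h] at hn
      rw [eHom_nat] at hn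
      rw [show ((1:ℕ):ℤ) = (1:ℤ) by norm_num, one_zsmul] at hn
      exact absurd hn (Point.some_ne_zero hP)
    · rw [← hn', h] at hn
      rw [eHom_nat] at hn
      rw [show ((2:ℕ):ℤ) = (2:ℤ) by norm_num, h2smul] at hn
      exact absurd hn (Point.some_ne_zero hP0)
    · rw [← hn', h] at hn
      rw [eHom_nat] at hn
      rw [show ((3:ℕ):ℤ) = (3:ℤ) by norm_num, h3smul] at hn
      exact absurd hn (Point.some_ne_zero hQ)
  · intro P
    rcases point_classify P with h0 | ⟨x, y, h, hPeq, hcoords⟩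
    · exact ⟨0, by rw [map_zero, h0]⟩
    · rcases hcoords with hc | hc | hc
      · rw [Prod.mk.injEq] at hc
        obtain ⟨hx, hy⟩ := hc
        subst hx; subst hy
        refine ⟨((2:ℕ) : ZMod 4), ?_⟩
        rw [eHom_nat, show ((2:ℕ):ℤ) = (2:ℤ) by norm_num, h2smul, hPeq]
      · rw [Prod.mk.injEq] at hc
        obtain ⟨hx, hy⟩ := hc
        subst hx; subst hy
        refine ⟨((1:ℕ) : ZMod 4), ?_⟩
        rw [eHom_nat, show ((1:ℕ):ℤ) = (1:ℤ) by norm_num, one_zsmul, hPeq]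
      · rw [Prod.mk.injEq] at hc
        obtain ⟨hx, hy⟩ := hc
        subst hx; subst hy
        refine ⟨((3:ℕ) : ZMod 4), ?_⟩
        rw [eHom_nat, show ((3:ℕ):ℤ) = (3:ℤ) by norm_num, h3smul, hPeq]

noncomputable def theIso : E₁.Point ≃+ ZMod 4 :=
  (AddEquiv.ofBijective eHom eHom_bij).symm

/-- The elliptic curve `E₁ : y² = x³ + 4x` over `ℚ` has Mordell–Weil group
isomorphic to `ℤ/4ℤ`, with nonzero points exactly `(0,0)` and `(2, ±4)`. -/
theorem stmt_12 :
    Nonempty (E₁.Point ≃+ ZMod 4) ∧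
      ∀ P : E₁.Point, P = 0 ∨ ∃ (x y : ℚ) (h : E₁.Nonsingular x y), P = Point.some _ _ h ∧
        ((x, y) = (0, 0) ∨ (x, y) = (2, 4) ∨ (x, y) = (2, -4)) :=
  ⟨⟨theIso⟩, point_classify⟩
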